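/- arXiv:2509.25136 — 3 statements merged into one kernel-verified Lean document; each statement's English description precedes it below -/
import Mathlib

section
/- Let X be an N×I real matrix and M an I×I matrix such that Mᵀ Xᵀ X M = N Ī_R where R = rank(X), and such that the column space of M equals the row space of X. Then X M M⁺ = X, where M⁺ is the Moore–Penrose pseudoinverse of M. -/
open Matrix

/-- `Ī_R`: the `I×I` matrix equal to the identity on the first `R` coordinates and zero
elsewhere. -/
def Ibar (I R : ℕ) : Matrix (Fin I) (Fin I) ℝ :=
  Matrix.of fun i j => if i = j ∧ (i : ℕ) < R then (1 : ℝ) else 0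

/-- `Mp` is the Moore–Penrose pseudoinverse of `M` (the four Penrose conditions). -/
def IsMoorePenrose {I : ℕ} (M Mp : Matrix (Fin I) (Fin I) ℝ) : Prop :=
  M * Mp * M = M ∧ Mp * M * Mp = Mp ∧ (M * Mp)ᵀ = M * Mp ∧ (Mp * M)ᵀ = Mp * M

theorem mul_whitening_mul_pinv {N I R : ℕ}
    (X : Matrix (Fin N) (Fin I) ℝ) (hR : X.rank = R)
    (M Mp : Matrix (Fin I) (Fin I) ℝ)
    (hW : Mᵀ * (Xᵀ * X) * M = (N : ℝ) • Ibar I R)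
    (hrange : LinearMap.range M.mulVecLin = LinearMap.range Xᵀ.mulVecLin)
    (hMp : IsMoorePenrose M Mp) :
    X * M * Mp = X := by
  have key : ∀ v, (M * Mp) *ᵥ (Xᵀ *ᵥ v) = Xᵀ *ᵥ v := by
    intro v
    obtain ⟨w, hw⟩ : ∃ w, M *ᵥ w = Xᵀ *ᵥ v := by
      have : Xᵀ *ᵥ v ∈ LinearMap.range M.mulVecLin := by
        rw [hrange]; exact ⟨v, rfl⟩
      exact this
    rw [← hw, mulVec_mulVec, hMp.1]
  have key2 : M * Mp * Xᵀ = Xᵀ := by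
    ext i j
    have h := congrFun (key (Pi.single j 1)) i
    rw [mulVec_mulVec] at h
    simpa [mulVec_single, mulVec_mulVec] using h
  have h3 := hMp.2.2.1
  calc X * M * Mp = X * (M * Mp) := by rw [Matrix.mul_assoc]
    _ = ((M * Mp)ᵀ * Xᵀ)ᵀ := by
        rw [transpose_mul, transpose_transpose, transpose_transpose]
    _ = (M * Mp * Xᵀ)ᵀ := by rw [h3]
    _ = X := by rw [key2, transpose_transpose]
end

section
/- Let X be an N×I real matrix of rank R and let M be an uncentered whitening matrix for X (i.e., Mᵀ Xᵀ X M = N Ī_R and range(M) = row(X)). Let W be an I×O real matrix, and let σ_1 ≥ σ_2 ≥ ... ≥ σ_U be the singular values of M⁺ W. Then for any P with 0 ≤ P ≤ U, ‖X W − X M T_P(M⁺ W)‖_F² = N · Σ_{i=P+1}^{U} σ_i², where T_P denotes truncation to the best rank-P approximation via SVD. -/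
open Matrix

/-- Squared Frobenius norm of a matrix. -/
def frobSq {m n : Type*} [Fintype m] [Fintype n] (A : Matrix m n ℝ) : ℝ :=
  ∑ i, ∑ j, (A i j) ^ 2

/-- Rectangular "diagonal" matrix with entries `s 0, s 1, …` on the main diagonal. -/
def rectDiag (I O : ℕ) (s : ℕ → ℝ) : Matrix (Fin I) (Fin O) ℝ :=
  Matrix.of fun i j => if (i : ℕ) = (j : ℕ) then s (i : ℕ) else 0

lemma frobSq_eq_trace {m n : Type*} [Fintype m] [Fintype n] (A : Matrix m n ℝ) :
    frobSq A = (Aᵀ * A).trace := by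
  simp only [frobSq, Matrix.trace, Matrix.diag_apply, Matrix.mul_apply,
    Matrix.transpose_apply, sq]
  exact Finset.sum_comm

lemma Ibar_eq_diagonal (I R : ℕ) :
    Ibar I R = Matrix.diagonal (fun i : Fin I => if (i : ℕ) < R then (1:ℝ) else 0) := by
  ext i j
  by_cases h : i = j <;> simp [Ibar, Matrix.diagonal, h]

theorem activation_aware_distortion {N I O R : ℕ}
    (X : Matrix (Fin N) (Fin I) ℝ) (hR : X.rank = R)
    (M Mp : Matrix (Fin I) (Fin I) ℝ)
    (hW : Mᵀ * (Xᵀ * X) * M = (N : ℝ) • Ibar I R)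
    (hrange : LinearMap.range M.mulVecLin = LinearMap.range Xᵀ.mulVecLin)
    (hMp : IsMoorePenrose M Mp)
    (W : Matrix (Fin I) (Fin O) ℝ)
    -- an SVD `Mp * W = U Σ Vmᵀ` with nonincreasing nonnegative singular values `s`
    (U : Matrix (Fin I) (Fin I) ℝ) (Vm : Matrix (Fin O) (Fin O) ℝ) (s : ℕ → ℝ)
    (hU : Uᵀ * U = 1) (hVm : Vmᵀ * Vm = 1)
    (hs0 : ∀ i, 0 ≤ s i) (hsmono : ∀ i j : ℕ, i ≤ j → s j ≤ s i)
    (hszero : ∀ i, min I O ≤ i → s i = 0)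
    (hSVD : Mp * W = U * rectDiag I O s * Vmᵀ)
    (P : ℕ) (hP : P ≤ min I O) :
    frobSq (X * W - X * M * (U * rectDiag I O (fun i => if i < P then s i else 0) * Vmᵀ))
      = (N : ℝ) * ∑ i ∈ Finset.Ico P (min I O), (s i) ^ 2 := by
  obtain ⟨h1, h2, h3, h4⟩ := hMp
  set J := Ibar I R with hJdef
  have hJdiag := Ibar_eq_diagonal I R
  have hJT : Jᵀ = J := by rw [hJdef, hJdiag, Matrix.diagonal_transpose]
  -- Step A: columns of X*M beyond R vanish
  have hXMcol : ∀ j : Fin I, R ≤ (j : ℕ) → ∀ n : Fin N, (X * M) n j = 0 := by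
    intro j hj
    have heq : Mᵀ * (Xᵀ * X) * M = (X * M)ᵀ * (X * M) := by
      rw [Matrix.transpose_mul]
      simp only [Matrix.mul_assoc]
    have hdiag : ((X * M)ᵀ * (X * M)) j j = 0 := by
      rw [← heq, hW]
      simp only [Matrix.smul_apply, hJdef, Ibar, Matrix.of_apply, smul_eq_mul]
      simp [hJdef, Ibar]
      omega
    have hsum : ∑ n : Fin N, (X * M) n j * (X * M) n j = 0 := by
      rw [Matrix.mul_apply] at hdiag
      simpa only [Matrix.transpose_apply] using hdiag
    intro n
    exact mul_self_eq_zero.mp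
      ((Finset.sum_eq_zero_iff_of_nonneg (fun i _ => mul_self_nonneg _)).mp hsum n
        (Finset.mem_univ n))
  -- Step A': columns of M beyond R vanish
  have hMcol : ∀ j : Fin I, R ≤ (j : ℕ) → ∀ i : Fin I, M i j = 0 := by
    intro j hj
    have hmem : (fun i => M i j) ∈ LinearMap.range Xᵀ.mulVecLin := by
      rw [← hrange]
      exact ⟨Pi.single j 1, by simp [Matrix.mulVecLin_apply, Matrix.mulVec_single]; rfl⟩
    obtain ⟨u, hu⟩ := hmem
    rw [Matrix.mulVecLin_apply] at hu
    have hXw : X *ᵥ (fun i => M i j) = 0 := by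
      funext n
      have h5 : (X *ᵥ fun i => M i j) n = (X * M) n j := by
        simp [Matrix.mulVec, Matrix.mul_apply, dotProduct]
      rw [h5, hXMcol j hj n]
      rfl
    have hdot : (fun i => M i j) ⬝ᵥ (fun i => M i j) = 0 := by
      calc (fun i => M i j) ⬝ᵥ (fun i => M i j)
          = (Xᵀ *ᵥ u) ⬝ᵥ (fun i => M i j) := by rw [hu]
        _ = u ⬝ᵥ (X *ᵥ fun i => M i j) := by
            rw [Matrix.mulVec_transpose, ← Matrix.dotProduct_mulVec]
        _ = 0 := by rw [hXw, dotProduct_zero]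
    intro i
    exact congrFun (dotProduct_self_eq_zero.mp hdot) i
  -- M * J = M
  have hMJ : M * J = M := by
    rw [hJdef, hJdiag]
    ext i j
    rw [Matrix.mul_diagonal]
    by_cases hjR : (j : ℕ) < R
    · simp [hjR]
    · simp [hjR, hMcol j (by omega) i]
  have hJMT : J * Mᵀ = Mᵀ := by
    have h5 := congrArg Matrix.transpose hMJ
    rwa [Matrix.transpose_mul, hJT] at h5
  -- J * Mp = Mp
  have hMp' : Mp = Mᵀ * Mpᵀ * Mp := by
    conv_lhs => rw [← h2]
    rw [← h4, Matrix.transpose_mul]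
  have hJMp : J * Mp = Mp := by
    calc J * Mp = J * (Mᵀ * Mpᵀ * Mp) := by rw [← hMp']
      _ = (J * Mᵀ) * Mpᵀ * Mp := by noncomm_ring
      _ = Mᵀ * Mpᵀ * Mp := by rw [hJMT]
      _ = Mp := hMp'.symm
  -- X * M * Mp = X
  have hcol : (M * Mp) * Xᵀ = Xᵀ := by
    ext i n
    obtain ⟨v, hv⟩ : (fun k => Xᵀ k n) ∈ LinearMap.range M.mulVecLin := by
      rw [hrange]
      exact ⟨Pi.single n 1, by simp [Matrix.mulVecLin_apply, Matrix.mulVec_single]; rfl⟩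
    rw [Matrix.mulVecLin_apply] at hv
    have h5 : ((M * Mp) * Xᵀ) i n = ((M * Mp) *ᵥ (fun k => Xᵀ k n)) i := by
      simp [Matrix.mulVec, Matrix.mul_apply, dotProduct]
    rw [h5, ← hv, Matrix.mulVec_mulVec, h1, hv]
  have hXMMp : X * M * Mp = X := by
    have h5 := congrArg Matrix.transpose hcol
    rw [Matrix.transpose_mul, Matrix.transpose_transpose, h3] at h5
    rwa [← Matrix.mul_assoc] at h5
  -- diagonal algebra
  set d : ℕ → ℝ := fun i => if i < P then 0 else s i with hd
  set G := Matrix.diagonal (fun j : Fin O => if (j:ℕ) < P then (0:ℝ) else 1) with hG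
  have hsplit : rectDiag I O s - rectDiag I O (fun i => if i < P then s i else 0)
      = rectDiag I O d := by
    ext i j
    simp only [Matrix.sub_apply, rectDiag, Matrix.of_apply, hd]
    split_ifs <;> simp
  have hDG : rectDiag I O d = rectDiag I O s * G := by
    ext i j
    rw [hG, Matrix.mul_diagonal]
    simp only [rectDiag, Matrix.of_apply, hd]
    by_cases hij : (i:ℕ) = (j:ℕ)
    · rw [if_pos hij, if_pos hij, hij]
      split_ifs <;> ring
    · rw [if_neg hij, if_neg hij, zero_mul]
  -- residual form
  have hXW : X * W = X * M * (U * rectDiag I O s * Vmᵀ) := by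
    calc X * W = (X * M * Mp) * W := by rw [hXMMp]
      _ = X * M * (Mp * W) := by simp only [Matrix.mul_assoc]
      _ = X * M * (U * rectDiag I O s * Vmᵀ) := by rw [hSVD]
  have hBeq : X * W - X * M * (U * rectDiag I O (fun i => if i < P then s i else 0) * Vmᵀ)
      = X * M * (U * rectDiag I O d * Vmᵀ) := by
    rw [hXW, ← Matrix.mul_sub]
    congr 1
    rw [← Matrix.sub_mul, ← Matrix.mul_sub, hsplit]
  -- J absorbs U * rectDiag d
  have hJUSV : J * (U * rectDiag I O s * Vmᵀ) = U * rectDiag I O s * Vmᵀ := by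
    rw [← hSVD, ← Matrix.mul_assoc, hJMp]
  have h5 : J * (U * rectDiag I O s) = U * rectDiag I O s := by
    have h6 := congrArg (fun A => A * Vm) hJUSV
    simp only [Matrix.mul_assoc, hVm, Matrix.mul_one] at h6
    simpa only [Matrix.mul_assoc] using h6
  have hJUD : J * (U * rectDiag I O d) = U * rectDiag I O d := by
    calc J * (U * rectDiag I O d) = J * (U * rectDiag I O s) * G := by
          rw [hDG]; simp only [Matrix.mul_assoc]
      _ = (U * rectDiag I O s) * G := by rw [h5]
      _ = U * rectDiag I O d := by rw [hDG, Matrix.mul_assoc]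
  -- trace computation
  have htrace : frobSq (X * M * (U * rectDiag I O d * Vmᵀ))
      = (N : ℝ) * ((rectDiag I O d)ᵀ * rectDiag I O d).trace := by
    rw [frobSq_eq_trace]
    have hexp : (X * M * (U * rectDiag I O d * Vmᵀ))ᵀ * (X * M * (U * rectDiag I O d * Vmᵀ))
        = (U * rectDiag I O d * Vmᵀ)ᵀ * ((Mᵀ * (Xᵀ * X) * M) * (U * rectDiag I O d * Vmᵀ)) := by
      simp only [Matrix.transpose_mul, Matrix.mul_assoc]
    rw [hexp, hW]
    rw [Matrix.smul_mul, Matrix.mul_smul, Matrix.trace_smul, smul_eq_mul]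
    congr 1
    have hJB : J * (U * rectDiag I O d * Vmᵀ) = U * rectDiag I O d * Vmᵀ := by
      rw [← Matrix.mul_assoc, hJUD]
    rw [hJB]
    -- trace((U D Vᵀ)ᵀ (U D Vᵀ)) = trace(Dᵀ D)
    have hBtB : (U * rectDiag I O d * Vmᵀ)ᵀ * (U * rectDiag I O d * Vmᵀ)
        = Vm * ((rectDiag I O d)ᵀ * rectDiag I O d) * Vmᵀ := by
      calc (U * rectDiag I O d * Vmᵀ)ᵀ * (U * rectDiag I O d * Vmᵀ)
          = Vm * ((rectDiag I O d)ᵀ * ((Uᵀ * U) * (rectDiag I O d * Vmᵀ))) := by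
            simp only [Matrix.transpose_mul, Matrix.transpose_transpose, Matrix.mul_assoc]
        _ = Vm * ((rectDiag I O d)ᵀ * rectDiag I O d) * Vmᵀ := by
            rw [hU, Matrix.one_mul]; simp only [Matrix.mul_assoc]
    rw [hBtB, Matrix.trace_mul_comm (Vm * ((rectDiag I O d)ᵀ * rectDiag I O d)) (Vmᵀ),
      ← Matrix.mul_assoc, hVm, Matrix.one_mul]
  rw [hBeq, htrace]
  congr 1
  -- trace(Dᵀ D) = ∑ Ico
  have hstep : ((rectDiag I O d)ᵀ * rectDiag I O d).trace
      = ∑ k : Fin O, (if (k:ℕ) < I then d (k:ℕ) ^ 2 else 0) := by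
    simp only [Matrix.trace, Matrix.diag_apply, Matrix.mul_apply, Matrix.transpose_apply,
      rectDiag, Matrix.of_apply]
    refine Finset.sum_congr rfl fun k _ => ?_
    by_cases hk : (k:ℕ) < I
    · rw [if_pos hk]
      rw [Finset.sum_eq_single (⟨(k:ℕ), hk⟩ : Fin I)]
      · simp [pow_two]
      · intro l _ hl
        have hlk : ¬ ((l:ℕ) = (k:ℕ)) := fun h => hl (Fin.ext h)
        simp [hlk]
      · simp
    · rw [if_neg hk]
      apply Finset.sum_eq_zero
      intro l _
      have hlk : ¬ ((l:ℕ) = (k:ℕ)) := by omega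
      simp [hlk]
  rw [hstep, Fin.sum_univ_eq_sum_range (fun k => if k < I then d k ^ 2 else 0) O]
  have hsub : Finset.Ico P (min I O) ⊆ Finset.range O := by
    intro k hk
    rw [Finset.mem_range]
    have := (Finset.mem_Ico.mp hk).2
    omega
  have hzero : ∀ k ∈ Finset.range O, k ∉ Finset.Ico P (min I O) →
      (if k < I then d k ^ 2 else 0) = 0 := by
    intro k hkO hknot
    rw [Finset.mem_range] at hkO
    rw [Finset.mem_Ico, not_and_or, not_lt] at hknot
    by_cases hkI : k < I
    · rw [if_pos hkI]
      rcases hknot with h | h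
      · push_neg at h
        simp [hd, h]
      · have hdk : d k = s k := if_neg (Nat.not_lt.mpr (hP.trans h))
        rw [hdk, hszero k h]
        ring
    · rw [if_neg hkI]
  rw [← Finset.sum_subset hsub hzero]
  refine Finset.sum_congr rfl fun k hk => ?_
  obtain ⟨hk1, hk2⟩ := Finset.mem_Ico.mp hk
  have hkI : k < I := lt_of_lt_of_le hk2 (min_le_left I O)
  rw [if_pos hkI]
  have hdk : d k = s k := if_neg (Nat.not_lt.mpr hk1)
  rw [hdk]
end

section
/- Let X be an N×I real matrix of rank R and M an uncentered whitening matrix for X (Mᵀ Xᵀ X M = N Ī_R, range(M) = row(X)). Then for any I×O real matrix W and any P ≥ 1, Σ_{i=1}^P σ_i²(XW) = N · Σ_{i=1}^P σ_i²(M⁺ W). -/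
open Matrix

/-- Restores the lemma removed from Mathlib: `Aᵀ * A` is Hermitian for a real matrix. -/
theorem Matrix.isHermitian_transpose_mul_self {m n : Type*} [Fintype m] (A : Matrix m n ℝ) :
    (Aᵀ * A).IsHermitian := by
  simpa [Matrix.conjTranspose_eq_transpose_of_trivial] using Matrix.isHermitian_conjTranspose_mul_self A

/-- The singular values of a real matrix, in nonincreasing order, obtained as the
square roots of the eigenvalues of `Aᵀ * A`. -/
noncomputable def svals {M N : ℕ} (A : Matrix (Fin M) (Fin N) ℝ) : Fin N → ℝ :=
  fun i =>
    Real.sqrt ((Matrix.isHermitian_transpose_mul_self A).eigenvalues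
      (Tuple.sort ((Matrix.isHermitian_transpose_mul_self A).eigenvalues) i.rev))

section Aux
open Polynomial


lemma charpoly_conj {n : ℕ} (P Q B : Matrix (Fin n) (Fin n) ℝ) (h1 : P * Q = 1) :
    (P * B * Q).charpoly = B.charpoly := by
  have h1' : (P.map C) * (Q.map C) = 1 := by
    rw [← Matrix.map_mul, h1, Matrix.map_one _ (map_zero C) (map_one C)]
  have key : (P * B * Q).charmatrix = P.map C * B.charmatrix * Q.map C := by
    unfold Matrix.charmatrix
    have h2 : ((C : ℝ →+* ℝ[X]).mapMatrix (P * B * Q) : Matrix (Fin n) (Fin n) ℝ[X])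
        = P.map C * B.map C * Q.map C := by
      simp [Matrix.map_mul]
    rw [h2, mul_sub, sub_mul]
    congr 1
    rw [Matrix.scalar_apply, ← Matrix.smul_eq_mul_diagonal, Matrix.smul_mul, h1',
      Matrix.smul_one_eq_diagonal]
  rw [Matrix.charpoly, Matrix.charpoly, key, det_mul, det_mul]
  have h3 : (P.map C).det * (Q.map C).det = 1 := by
    rw [← det_mul, h1', det_one]
  calc (P.map C).det * B.charmatrix.det * (Q.map C).det
      = B.charmatrix.det * ((P.map C).det * (Q.map C).det) := by ring
    _ = B.charmatrix.det := by rw [h3, mul_one]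

lemma charpoly_diagonal {n : ℕ} (d : Fin n → ℝ) :
    (Matrix.diagonal d).charpoly = ∏ i, (X - C (d i)) := by
  rw [Matrix.charpoly]
  have : (Matrix.diagonal d).charmatrix = Matrix.diagonal (fun i => (X : ℝ[X]) - C (d i)) := by
    ext i j
    by_cases h : i = j
    · subst h; simp
    · simp [Matrix.charmatrix_apply_ne _ _ _ h, Matrix.diagonal_apply_ne _ h,
        Matrix.diagonal_apply_ne d h]
  rw [this, Matrix.det_diagonal]

lemma charpoly_hermitian {n : ℕ} {A : Matrix (Fin n) (Fin n) ℝ} (hA : A.IsHermitian) :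
    A.charpoly = ∏ i, (X - C (hA.eigenvalues i)) := by
  have hs := hA.spectral_theorem
  have hU : (hA.eigenvectorUnitary : Matrix (Fin n) (Fin n) ℝ) *
      (star (hA.eigenvectorUnitary : Matrix (Fin n) (Fin n) ℝ)) = 1 :=
    (Matrix.mem_unitaryGroup_iff).mp hA.eigenvectorUnitary.2
  have hdiag : (Matrix.diagonal (RCLike.ofReal ∘ hA.eigenvalues) : Matrix (Fin n) (Fin n) ℝ)
      = Matrix.diagonal hA.eigenvalues := by
    congr 1
  calc A.charpoly
      = ((hA.eigenvectorUnitary : Matrix (Fin n) (Fin n) ℝ) * Matrix.diagonal hA.eigenvalues *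
          (star (hA.eigenvectorUnitary : Matrix (Fin n) (Fin n) ℝ))).charpoly := by
        rw [← hdiag]; exact congrArg _ hs
    _ = (Matrix.diagonal hA.eigenvalues).charpoly := by
        exact charpoly_conj _ _ _ hU
    _ = ∏ i, (X - C (hA.eigenvalues i)) := _root_.charpoly_diagonal _


lemma ofFn_coe_multiset {n : ℕ} (h : Fin n → ℝ) :
    ((List.ofFn h : List ℝ) : Multiset ℝ) = Multiset.map h Finset.univ.val := by
  rw [List.ofFn_eq_map]
  simp [Fin.univ_def]

lemma sorted_eq_of_multiset_eq {n : ℕ} {f g : Fin n → ℝ}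
    (h : Multiset.map f Finset.univ.val = Multiset.map g Finset.univ.val) :
    f ∘ Tuple.sort f = g ∘ Tuple.sort g := by
  have hperm : ∀ (k : Fin n → ℝ), Multiset.map (k ∘ Tuple.sort k) Finset.univ.val
      = Multiset.map k Finset.univ.val := by
    intro k
    have h2 : Finset.univ.val.map (Tuple.sort k : Fin n → Fin n) = Finset.univ.val := by
      have h3 := congrArg Finset.val (Finset.map_univ_equiv (Tuple.sort k))
      simpa using h3
    conv_rhs => rw [← h2]
    rw [Multiset.map_map]
  have hp : (List.ofFn (f ∘ Tuple.sort f)).Perm (List.ofFn (g ∘ Tuple.sort g)) := by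
    rw [← Multiset.coe_eq_coe, ofFn_coe_multiset, ofFn_coe_multiset, hperm, hperm, h]
  exact List.ofFn_injective
    (List.Perm.eq_of_sortedLE (Tuple.monotone_sort f).sortedLE_ofFn
      (Tuple.monotone_sort g).sortedLE_ofFn hp)

lemma multiset_eq_of_prod_eq {n : ℕ} {f g : Fin n → ℝ}
    (h : ∏ i, (X - C (f i)) = ∏ i, (X - C (g i))) :
    Multiset.map f Finset.univ.val = Multiset.map g Finset.univ.val := by
  have key : ∀ k : Fin n → ℝ,
      (∏ i, (X - C (k i))).roots = Multiset.map k Finset.univ.val := by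
    intro k
    have h2 : ∏ i, (X - C (k i)) = ((Finset.univ.val.map k).map fun a => X - C a).prod := by
      rw [Multiset.map_map]; rfl
    rw [h2, Polynomial.roots_multiset_prod_X_sub_C]
  rw [← key f, ← key g, h]

lemma sorted_eig_smul {n : ℕ} {A : Matrix (Fin n) (Fin n) ℝ} (hA : A.IsHermitian)
    {c : ℝ} (hc : 0 ≤ c) (hcA : ((c • A : Matrix (Fin n) (Fin n) ℝ)).IsHermitian) (i : Fin n) :
    hcA.eigenvalues (Tuple.sort hcA.eigenvalues i)
      = c * hA.eigenvalues (Tuple.sort hA.eigenvalues i) := by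
  set μ := hA.eigenvalues with hμ
  set φ : Fin n → ℝ := fun j => c * μ j with hφ
  have hdiag : (Matrix.diagonal (RCLike.ofReal ∘ μ) : Matrix (Fin n) (Fin n) ℝ)
      = Matrix.diagonal μ := by congr 1
  have hU : (hA.eigenvectorUnitary : Matrix (Fin n) (Fin n) ℝ) *
      (star (hA.eigenvectorUnitary : Matrix (Fin n) (Fin n) ℝ)) = 1 :=
    (Matrix.mem_unitaryGroup_iff).mp hA.eigenvectorUnitary.2
  have hch : (c • A).charpoly = ∏ j, (X - C (φ j)) := by
    have hs := hA.spectral_theorem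
    rw [hdiag] at hs
    have h2 : c • A = (hA.eigenvectorUnitary : Matrix (Fin n) (Fin n) ℝ) *
        Matrix.diagonal φ * (star (hA.eigenvectorUnitary : Matrix (Fin n) (Fin n) ℝ)) := by
      conv_lhs => rw [hs]
      have hφd : Matrix.diagonal φ = c • Matrix.diagonal μ := by
        rw [← Matrix.diagonal_smul]; rfl
      rw [hφd, mul_smul_comm, smul_mul_assoc]
      rfl
    rw [h2, charpoly_conj _ _ _ hU, _root_.charpoly_diagonal]
  have hprod : ∏ j, (X - C (hcA.eigenvalues j)) = ∏ j, (X - C (φ j)) := by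
    rw [← charpoly_hermitian hcA, hch]
  have hsorted := sorted_eq_of_multiset_eq (multiset_eq_of_prod_eq hprod)
  have hm : Monotone (φ ∘ Tuple.sort μ) := by
    intro a b hab
    exact mul_le_mul_of_nonneg_left (Tuple.monotone_sort μ hab) hc
  have hφs : φ ∘ Tuple.sort φ = φ ∘ Tuple.sort μ := by
    rw [Tuple.comp_sort_eq_comp_iff_monotone.mpr hm]
  have := congrFun (hsorted.trans hφs) i
  simpa using this

lemma eig_congr {n : ℕ} {A B : Matrix (Fin n) (Fin n) ℝ} (h : A = B)
    (hA : A.IsHermitian) (hB : B.IsHermitian) : hA.eigenvalues = hB.eigenvalues := by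
  subst h; rfl

lemma key_identity {N I R : ℕ}
    (X : Matrix (Fin N) (Fin I) ℝ)
    (M Mp : Matrix (Fin I) (Fin I) ℝ)
    (hW : Mᵀ * (Xᵀ * X) * M = (N : ℝ) • Ibar I R)
    (hrange : LinearMap.range M.mulVecLin = LinearMap.range Xᵀ.mulVecLin)
    (hMp : IsMoorePenrose M Mp) :
    Xᵀ * X = (N : ℝ) • (Mpᵀ * Mp) := by
  obtain ⟨h1, h2, h3, h4⟩ := hMp
  -- Step A : X * M * Mp = X
  have hfix : ∀ v, (M * Mp) *ᵥ (Xᵀ *ᵥ v) = Xᵀ *ᵥ v := by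
    intro v
    have hv : Xᵀ *ᵥ v ∈ LinearMap.range M.mulVecLin := by
      rw [hrange]; exact ⟨v, rfl⟩
    obtain ⟨u, hu⟩ := hv
    rw [← hu]
    show (M * Mp) *ᵥ (M *ᵥ u) = M *ᵥ u
    rw [Matrix.mulVec_mulVec, h1]
  have hXMMp : M * Mp * Xᵀ = Xᵀ := by
    ext i j
    have h5 : (M * Mp * Xᵀ) *ᵥ Pi.single j 1 = Xᵀ *ᵥ Pi.single j 1 := by
      rw [← Matrix.mulVec_mulVec, hfix]
    have := congrFun h5 i
    simpa [Matrix.mulVec_single] using this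
  have hA : X * M * Mp = X := by
    have := congrArg Matrix.transpose hXMMp
    rwa [Matrix.transpose_mul, Matrix.transpose_transpose, h3, ← Matrix.mul_assoc] at this
  -- Step B : columns of M beyond R vanish, so M * Ibar I R = M
  have hXMcol : ∀ j : Fin I, (R : ℕ) ≤ j → ∀ n, (X * M) n j = 0 := by
    intro j hj n
    have hdiag := congrFun (congrFun hW j) j
    have hIbar : ((N : ℝ) • Ibar I R) j j = 0 := by
      simp [Ibar, Matrix.smul_apply, not_lt.mpr hj]
    have hform : (Mᵀ * (Xᵀ * X) * M) j j = ∑ n, (X * M) n j ^ 2 := by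
      have : Mᵀ * (Xᵀ * X) * M = (X * M)ᵀ * (X * M) := by
        rw [Matrix.transpose_mul]; simp only [Matrix.mul_assoc]
      rw [this]
      simp only [Matrix.mul_apply, Matrix.transpose_apply, pow_two]
    rw [hform, hIbar] at hdiag
    have hnn : ∀ n ∈ Finset.univ, (0:ℝ) ≤ (X * M) n j ^ 2 := fun n _ => sq_nonneg _
    have := (Finset.sum_eq_zero_iff_of_nonneg hnn).mp hdiag n (Finset.mem_univ n)
    exact (pow_eq_zero_iff two_ne_zero).mp this
  have hMcol : ∀ j : Fin I, (R : ℕ) ≤ j → ∀ k, M k j = 0 := by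
    intro j hj
    -- the column m_j = M *ᵥ e_j lies in range Xᵀ
    have hv : M *ᵥ Pi.single j 1 ∈ LinearMap.range Xᵀ.mulVecLin := by
      rw [← hrange]; exact ⟨Pi.single j 1, rfl⟩
    obtain ⟨v, hv⟩ := hv
    have hXm : X *ᵥ (M *ᵥ Pi.single j 1) = 0 := by
      funext n
      rw [Matrix.mulVec_mulVec]
      have := hXMcol j hj n
      simp [Matrix.mulVec_single, this]
    have hv' : Xᵀ *ᵥ v = M *ᵥ Pi.single j 1 := hv
    have hdot : (M *ᵥ Pi.single j 1) ⬝ᵥ (M *ᵥ Pi.single j 1) = 0 := by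
      calc (M *ᵥ Pi.single j 1) ⬝ᵥ (M *ᵥ Pi.single j 1)
          = (Xᵀ *ᵥ v) ⬝ᵥ (M *ᵥ Pi.single j 1) := by rw [hv']
        _ = v ⬝ᵥ (X *ᵥ (M *ᵥ Pi.single j 1)) := by
            rw [Matrix.mulVec_transpose, ← Matrix.dotProduct_mulVec]
        _ = 0 := by rw [hXm, dotProduct_zero]
    intro k
    have hz : M *ᵥ Pi.single j 1 = 0 := by
      have : ∀ k ∈ Finset.univ, (0:ℝ) ≤ (M *ᵥ Pi.single j 1) k * (M *ᵥ Pi.single j 1) k :=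
        fun k _ => mul_self_nonneg _
      have h0 := (Finset.sum_eq_zero_iff_of_nonneg this).mp hdot
      funext k'
      exact mul_self_eq_zero.mp (h0 k' (Finset.mem_univ k'))
    have := congrFun hz k
    simpa [Matrix.mulVec_single] using this
  have hMIbar : M * Ibar I R = M := by
    ext k j
    rw [Matrix.mul_apply]
    by_cases hj : (j : ℕ) < R
    · rw [Finset.sum_eq_single j]
      · simp [Ibar, hj]
      · intro l _ hl; simp [Ibar, hl]
      · simp
    · rw [hMcol j (not_lt.mp hj) k]
      apply Finset.sum_eq_zero
      intro l _
      by_cases hl : l = j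
      · subst hl; simp [Ibar, hj]
      · simp [Ibar, hl]
  -- Step C : Mp = Ibar * Mp
  have hIbarT : (Ibar I R)ᵀ = Ibar I R := by
    ext i j
    by_cases h : i = j
    · subst h; rfl
    · simp [Ibar, Matrix.transpose_apply, h, Ne.symm h]
  have hMT : Mᵀ = Ibar I R * Mᵀ := by
    conv_lhs => rw [← hMIbar]
    rw [Matrix.transpose_mul, hIbarT]
  have hMp_eq : Mp = Mᵀ * (Mpᵀ * Mp) := by
    conv_lhs => rw [← h2, ← h4]
    rw [Matrix.transpose_mul, Matrix.mul_assoc]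
  have hC : Ibar I R * Mp = Mp := by
    conv_lhs => rw [hMp_eq]
    rw [← Matrix.mul_assoc, ← hMT, ← hMp_eq]
  -- Step D
  have hXX : Xᵀ * X = (X * M * Mp)ᵀ * (X * M * Mp) := by rw [hA]
  rw [hXX]
  rw [Matrix.transpose_mul, Matrix.transpose_mul]
  have : Mpᵀ * (Mᵀ * Xᵀ) * (X * M * Mp) = Mpᵀ * (Mᵀ * (Xᵀ * X) * M) * Mp := by
    simp only [Matrix.mul_assoc]
  rw [this, hW]
  rw [Matrix.mul_smul, Matrix.smul_mul]
  congr 1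
  rw [Matrix.mul_assoc, hC]

end Aux

theorem sum_sq_svals_eq {N I O R : ℕ}
    (X : Matrix (Fin N) (Fin I) ℝ) (hR : X.rank = R)
    (M Mp : Matrix (Fin I) (Fin I) ℝ)
    (hW : Mᵀ * (Xᵀ * X) * M = (N : ℝ) • Ibar I R)
    (hrange : LinearMap.range M.mulVecLin = LinearMap.range Xᵀ.mulVecLin)
    (hMp : IsMoorePenrose M Mp)
    (W : Matrix (Fin I) (Fin O) ℝ) (P : ℕ) (hP : 1 ≤ P) :
    ∑ i ∈ Finset.univ.filter (fun i : Fin O => (i : ℕ) < P), (svals (X * W) i) ^ 2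
      = (N : ℝ) *
        ∑ i ∈ Finset.univ.filter (fun i : Fin O => (i : ℕ) < P), (svals (Mp * W) i) ^ 2 := by
  have key := key_identity X M Mp hW hrange hMp
  have keyW : (X * W)ᵀ * (X * W) = (N : ℝ) • ((Mp * W)ᵀ * (Mp * W)) := by
    rw [Matrix.transpose_mul, Matrix.transpose_mul]
    calc Wᵀ * Xᵀ * (X * W) = Wᵀ * (Xᵀ * X) * W := by simp only [Matrix.mul_assoc]
      _ = Wᵀ * ((N : ℝ) • (Mpᵀ * Mp)) * W := by rw [key]
      _ = (N : ℝ) • (Wᵀ * Mpᵀ * (Mp * W)) := by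
          rw [Matrix.mul_smul, Matrix.smul_mul]
          congr 1
          simp only [Matrix.mul_assoc]
  have h1' : (((N : ℝ) • ((Mp * W)ᵀ * (Mp * W)) : Matrix (Fin O) (Fin O) ℝ)).IsHermitian :=
    keyW ▸ Matrix.isHermitian_transpose_mul_self (X * W)
  have he : (Matrix.isHermitian_transpose_mul_self (X * W)).eigenvalues = h1'.eigenvalues :=
    eig_congr keyW _ _
  have hterm : ∀ i : Fin O, svals (X * W) i ^ 2 = (N : ℝ) * svals (Mp * W) i ^ 2 := by
    intro i
    have hs := sorted_eig_smul (Matrix.isHermitian_transpose_mul_self (Mp * W))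
      (by positivity : (0:ℝ) ≤ (N : ℝ)) h1' i.rev
    have hnn2 := Matrix.eigenvalues_conjTranspose_mul_self_nonneg (Mp * W)
      (Tuple.sort (Matrix.isHermitian_transpose_mul_self (Mp * W)).eigenvalues i.rev)
    unfold svals
    rw [he, hs, Real.sq_sqrt (by positivity), Real.sq_sqrt (by exact hnn2)]
  rw [Finset.mul_sum]
  exact Finset.sum_congr rfl fun i _ => hterm i
end
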